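/- Let F and E be order-continuous Banach sequence lattices with ℓ_1 ↪ F ↪ E ↪ ℓ_∞, and let λ ∈ ℓ_∞. Then the Hausdorff measure of noncompactness of the diagonal operator D_λ : F → E satisfies β(D_λ) = limsup_{n→∞} |λ_n| (up to equivalence of constants coming from the embeddings). -/

import Mathlib

open MeasureTheory Complex Filter Topology Set
open scoped ENNReal

noncomputable section

/-- The `n`-th Taylor coefficient of `f` at `0`. -/
def taylorCoeff (f : ℂ → ℂ) (n : ℕ) : ℂ := iteratedDeriv n f 0 / n.factorial

/-- The `p`-integral mean of `f` on the circle of radius `r` (finite `p`). -/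
def circleMean (p : ℝ) (f : ℂ → ℂ) (r : ℝ) : ℝ :=
  ((1 / (2 * Real.pi)) * ∫ t in (0:ℝ)..(2 * Real.pi),
      ‖f ((r : ℂ) * Complex.exp (t * Complex.I))‖ ^ p) ^ (1 / p)

/-- The sup of `|f|` on the circle of radius `r`. -/
def circleSup (f : ℂ → ℂ) (r : ℝ) : ℝ :=
  ⨆ t : ℝ, ‖f ((r : ℂ) * Complex.exp (t * Complex.I))‖

def hardyMean (p : ℝ≥0∞) (f : ℂ → ℂ) (r : ℝ) : ℝ :=
  if p = ⊤ then circleSup f r else circleMean p.toReal f r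

/-- Membership in the Hardy space `H_p` of the unit disk. -/
def MemHardy (p : ℝ≥0∞) (f : ℂ → ℂ) : Prop :=
  AnalyticOn ℂ f (Metric.ball (0:ℂ) 1) ∧
    BddAbove ((fun r => hardyMean p f r) '' Set.Ico (0:ℝ) 1)

/-- The `H_p` norm: the sup of the `p`-means over radii `0 ≤ r < 1`. -/
def hardyNorm (p : ℝ≥0∞) (f : ℂ → ℂ) : ℝ :=
  sSup ((fun r => hardyMean p f r) '' Set.Ico (0:ℝ) 1)

/-- The `ℓ_q` norm of a sequence. -/
def lqNorm (q : ℝ≥0∞) (x : ℕ → ℂ) : ℝ :=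
  if q = ⊤ then ⨆ n, ‖x n‖ else (∑' n, ‖x n‖ ^ q.toReal) ^ (1 / q.toReal)

/-- Coordinatewise multiplication of sequences. -/
def seqMul (l x : ℕ → ℂ) : ℕ → ℂ := fun n => l n * x n

/-- A Banach sequence lattice on ℤ₊: a Banach ideal space of sequences with monotone norm. -/
structure SeqLattice where
  Mem : (ℕ → ℂ) → Prop
  norm : (ℕ → ℂ) → ℝ
  zero_mem : Mem 0
  add_mem : ∀ x y, Mem x → Mem y → Mem (x + y)
  smul_mem : ∀ (c : ℂ) x, Mem x → Mem (c • x)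
  norm_nonneg : ∀ x, 0 ≤ norm x
  norm_eq_zero_iff : ∀ x, Mem x → (norm x = 0 ↔ x = 0)
  norm_add_le : ∀ x y, Mem x → Mem y → norm (x + y) ≤ norm x + norm y
  norm_smul : ∀ (c : ℂ) x, Mem x → norm (c • x) = ‖c‖ * norm x
  ideal : ∀ x y, Mem x → (∀ n, ‖y n‖ ≤ ‖x n‖) → Mem y ∧ norm y ≤ norm x
  complete : ∀ u : ℕ → (ℕ → ℂ), (∀ m, Mem (u m)) →
    (∀ ε : ℝ, 0 < ε → ∃ N, ∀ m ≥ N, ∀ n ≥ N, norm (u m - u n) ≤ ε) →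
    ∃ x, Mem x ∧ Tendsto (fun m => norm (u m - x)) atTop (𝓝 0)

/-- Order continuity: every nonnegative, pointwise nonincreasing sequence of elements of `E`
converging pointwise to `0` converges to `0` in the norm of `E`. -/
def OrderContinuous (E : SeqLattice) : Prop :=
  ∀ u : ℕ → ℕ → ℝ,
    (∀ m, E.Mem fun k => (u m k : ℂ)) →
    (∀ m k, 0 ≤ u m k) →
    (∀ k, Antitone fun m => u m k) →
    (∀ k, Tendsto (fun m => u m k) atTop (𝓝 0)) →
    Tendsto (fun m => E.norm fun k => (u m k : ℂ)) atTop (𝓝 0)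

/-- A set of sequences is solid if it is an ideal. -/
def IsSolid (S : Set (ℕ → ℂ)) : Prop :=
  ∀ x ∈ S, ∀ y : ℕ → ℂ, (∀ n, ‖y n‖ ≤ ‖x n‖) → y ∈ S

/-- The solid hull: the smallest solid set containing `A`. -/
def solidHull (A : Set (ℕ → ℂ)) : Set (ℕ → ℂ) := ⋂₀ {S | IsSolid S ∧ A ⊆ S}

/-- The set of multipliers from `F` into `E`. -/
def MultSet (F E : Set (ℕ → ℂ)) : Set (ℕ → ℂ) := {l | ∀ x ∈ F, seqMul l x ∈ E}

/-- A Banach space of analytic functions on the unit disk. -/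
structure AnalBanach where
  Mem : (ℂ → ℂ) → Prop
  norm : (ℂ → ℂ) → ℝ
  analytic : ∀ f, Mem f → AnalyticOn ℂ f (Metric.ball (0:ℂ) 1)
  zero_mem : Mem 0
  add_mem : ∀ f g, Mem f → Mem g → Mem (f + g)
  smul_mem : ∀ (c : ℂ) f, Mem f → Mem (c • f)
  norm_nonneg : ∀ f, 0 ≤ norm f
  norm_eq_zero_iff : ∀ f, Mem f → (norm f = 0 ↔ ∀ z ∈ Metric.ball (0:ℂ) 1, f z = 0)
  norm_add_le : ∀ f g, Mem f → Mem g → norm (f + g) ≤ norm f + norm g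
  norm_smul : ∀ (c : ℂ) f, Mem f → norm (c • f) = ‖c‖ * norm f
  complete : ∀ u : ℕ → (ℂ → ℂ), (∀ m, Mem (u m)) →
    (∀ ε : ℝ, 0 < ε → ∃ N, ∀ m ≥ N, ∀ n ≥ N, norm (u m - u n) ≤ ε) →
    ∃ f, Mem f ∧ Tendsto (fun m => norm (u m - f)) atTop (𝓝 0)

/-- The Taylor coefficient space `X̂` of a space of analytic functions. -/
def coeffSpace (X : AnalBanach) : Set (ℕ → ℂ) := {a | ∃ f, X.Mem f ∧ a = taylorCoeff f}

/-- `H_p ↪ X` continuously. -/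
def EmbedHardyIn (p : ℝ≥0∞) (X : AnalBanach) : Prop :=
  ∃ C : ℝ, 0 < C ∧ ∀ f, MemHardy p f → X.Mem f ∧ X.norm f ≤ C * hardyNorm p f

/-- `X ↪ H_p` continuously. -/
def EmbedInHardy (X : AnalBanach) (p : ℝ≥0∞) : Prop :=
  ∃ C : ℝ, 0 < C ∧ ∀ f, X.Mem f → MemHardy p f ∧ hardyNorm p f ≤ C * X.norm f

/-- Hausdorff measure of noncompactness of a set in a Banach sequence lattice. -/
def hmnc (E : SeqLattice) (A : Set (ℕ → ℂ)) : ℝ :=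
  sInf {ε : ℝ | 0 < ε ∧ ∃ Z : Finset (ℕ → ℂ),
    (∀ z ∈ Z, E.Mem z) ∧ ∀ x ∈ A, ∃ z ∈ Z, E.norm (x - z) ≤ ε}

/-- Hausdorff measure of noncompactness of a set of sequences in the `ℓ_q` metric. -/
def hmncLq (q : ℝ≥0∞) (A : Set (ℕ → ℂ)) : ℝ :=
  sInf {ε : ℝ | 0 < ε ∧ ∃ Z : Finset (ℕ → ℂ), ∀ x ∈ A, ∃ z ∈ Z, lqNorm q (x - z) ≤ ε}

/-- Relative compactness (total boundedness) of a set in a Banach sequence lattice. -/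
def RelCompactIn (E : SeqLattice) (A : Set (ℕ → ℂ)) : Prop :=
  ∀ ε : ℝ, 0 < ε → ∃ Z : Finset (ℕ → ℂ),
    (∀ z ∈ Z, E.Mem z) ∧ ∀ x ∈ A, ∃ z ∈ Z, E.norm (x - z) ≤ ε

/-- Relative compactness (total boundedness) of a set of sequences in `ℓ_q`. -/
def RelCompactInLq (q : ℝ≥0∞) (A : Set (ℕ → ℂ)) : Prop :=
  ∀ ε : ℝ, 0 < ε → ∃ Z : Finset (ℕ → ℂ), ∀ x ∈ A, ∃ z ∈ Z, lqNorm q (x - z) ≤ ε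

/-- The closed unit ball of `H_p`. -/
def hardyBall (p : ℝ≥0∞) : Set (ℂ → ℂ) := {f | MemHardy p f ∧ hardyNorm p f ≤ 1}

/-- The multiplier operator `M_λ : H_p → ℓ_q` is (bounded into `ℓ_q` and) compact. -/
def MulCompactHardyLq (p q : ℝ≥0∞) (l : ℕ → ℂ) : Prop :=
  (∀ f, MemHardy p f → Memℓp (seqMul l (taylorCoeff f)) q) ∧
  RelCompactInLq q ((fun f => seqMul l (taylorCoeff f)) '' hardyBall p)

/-- The multiplier operator `M_λ : X → E` maps `X` into `E` and is compact. -/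
def MulCompactX (X : AnalBanach) (E : SeqLattice) (l : ℕ → ℂ) : Prop :=
  (∀ f, X.Mem f → E.Mem (seqMul l (taylorCoeff f))) ∧
  RelCompactIn E ((fun f => seqMul l (taylorCoeff f)) '' {f | X.Mem f ∧ X.norm f ≤ 1})


/-- Auxiliary: a Banach sequence lattice is closed under subtraction. -/
lemma SL_mem_sub (E : SeqLattice) {x y : ℕ → ℂ} (hx : E.Mem x) (hy : E.Mem y) :
    E.Mem (x - y) := by
  have h := E.add_mem x ((-1 : ℂ) • y) hx (E.smul_mem _ _ hy)
  have h2 : x + (-1 : ℂ) • y = x - y := by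
    funext n; simp [sub_eq_add_neg]
  rwa [h2] at h

/-- Auxiliary: norms of differences are symmetric in a Banach sequence lattice. -/
lemma SL_norm_sub_comm (E : SeqLattice) {x y : ℕ → ℂ} (hx : E.Mem x) (hy : E.Mem y) :
    E.norm (x - y) = E.norm (y - x) := by
  have h := E.norm_smul (-1 : ℂ) (x - y) (SL_mem_sub E hx hy)
  have h2 : (-1 : ℂ) • (x - y) = y - x := by
    funext n; simp
  rw [h2] at h
  simpa using h.symm

theorem stmt_12 (F E : SeqLattice) (hF : OrderContinuous F) (hE : OrderContinuous E)
    (h1F : ∃ C : ℝ, 0 < C ∧ ∀ x : ℕ → ℂ, Summable (fun n => ‖x n‖) →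
      F.Mem x ∧ F.norm x ≤ C * ∑' n, ‖x n‖)
    (hFE : ∃ C : ℝ, 0 < C ∧ ∀ x, F.Mem x → E.Mem x ∧ E.norm x ≤ C * F.norm x)
    (hEinf : ∃ C : ℝ, 0 < C ∧ ∀ x, E.Mem x → ∀ n, ‖x n‖ ≤ C * E.norm x)
    (l : ℕ → ℂ) (hl : BddAbove (Set.range fun n => ‖l n‖)) :
    ∃ c C : ℝ, 0 < c ∧ 0 < C ∧
      c * Filter.limsup (fun n => ‖l n‖) atTop ≤
        hmnc E ((fun x => seqMul l x) '' {x | F.Mem x ∧ F.norm x ≤ 1}) ∧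
      hmnc E ((fun x => seqMul l x) '' {x | F.Mem x ∧ F.norm x ≤ 1}) ≤
        C * Filter.limsup (fun n => ‖l n‖) atTop := by
  classical
  obtain ⟨C1, hC1, h1⟩ := h1F
  obtain ⟨CFE, hCFE, hfe⟩ := hFE
  obtain ⟨CE, hCE, hce⟩ := hEinf
  obtain ⟨B0, hB0⟩ := hl
  set B : ℝ := max B0 0 with hBdef
  have hB : ∀ n, ‖l n‖ ≤ B := fun n =>
    le_trans (hB0 (Set.mem_range_self n)) (le_max_left _ _)
  have hBnn : 0 ≤ B := le_max_right _ _
  have hbdd : Filter.IsBoundedUnder (· ≤ ·) atTop (fun n => ‖l n‖) :=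
    Filter.isBoundedUnder_of ⟨B, hB⟩
  set L : ℝ := Filter.limsup (fun n => ‖l n‖) atTop with hLdef
  have hL0 : 0 ≤ L :=
    le_limsup_of_frequently_le (Filter.Frequently.of_forall (fun n => norm_nonneg _)) hbdd
  set A : Set (ℕ → ℂ) := (fun x => seqMul l x) '' {x | F.Mem x ∧ F.norm x ≤ 1} with hA
  set S : Set ℝ := {ε : ℝ | 0 < ε ∧ ∃ Z : Finset (ℕ → ℂ),
    (∀ z ∈ Z, E.Mem z) ∧ ∀ x ∈ A, ∃ z ∈ Z, E.norm (x - z) ≤ ε} with hS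
  have hmnc_eq : hmnc E A = sInf S := rfl
  -- membership of finitely supported sequences
  have hfin_memF : ∀ (N : ℕ) (y : ℕ → ℂ), (∀ n, N ≤ n → y n = 0) →
      F.Mem y ∧ Summable (fun n => ‖y n‖) := by
    intro N y hy
    have hsum : Summable (fun n => ‖y n‖) := by
      apply summable_of_ne_finset_zero (s := Finset.range N)
      intro n hn
      simp only [Finset.mem_range, not_lt] at hn
      simp [hy n hn]
    exact ⟨(h1 y hsum).1, hsum⟩
  -- boundedness of the diagonal operator
  have hDmem : ∀ x, F.Mem x →
      E.Mem (seqMul l x) ∧ E.norm (seqMul l x) ≤ B * CFE * F.norm x := by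
    intro x hx
    obtain ⟨hxE, hxEn⟩ := hfe x hx
    have hBx : E.Mem (((B : ℝ) : ℂ) • x) := E.smul_mem _ _ hxE
    have hdom : ∀ n, ‖seqMul l x n‖ ≤ ‖(((B : ℝ) : ℂ) • x) n‖ := by
      intro n
      simp only [seqMul, Pi.smul_apply, smul_eq_mul, norm_mul, Complex.norm_real,
        Real.norm_eq_abs, _root_.abs_of_nonneg hBnn]
      exact mul_le_mul_of_nonneg_right (hB n) (norm_nonneg _)
    obtain ⟨hmem, hnle⟩ := E.ideal _ _ hBx hdom
    have hsm := E.norm_smul (((B : ℝ) : ℂ)) x hxE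
    rw [hsm] at hnle
    simp only [Complex.norm_real, Real.norm_eq_abs, _root_.abs_of_nonneg hBnn] at hnle
    refine ⟨hmem, ?_⟩
    calc E.norm (seqMul l x) ≤ B * E.norm x := hnle
    _ ≤ B * (CFE * F.norm x) := mul_le_mul_of_nonneg_left hxEn hBnn
    _ = B * CFE * F.norm x := by ring
  -- nonemptiness of S
  have hS_ne : (B * CFE + 1) ∈ S := by
    refine ⟨by positivity, {0}, ?_, ?_⟩
    · intro z hz
      rw [Finset.mem_singleton] at hz
      rw [hz]; exact E.zero_mem
    · rintro _ ⟨x, ⟨hxF, hx1⟩, rfl⟩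
      refine ⟨0, Finset.mem_singleton_self 0, ?_⟩
      obtain ⟨_, hb⟩ := hDmem x hxF
      have hb2 : B * CFE * F.norm x ≤ B * CFE * 1 :=
        mul_le_mul_of_nonneg_left hx1 (by positivity)
      calc E.norm (seqMul l x - 0) = E.norm (seqMul l x) := by rw [sub_zero]
      _ ≤ B * CFE * F.norm x := hb
      _ ≤ B * CFE + 1 := by nlinarith
  -- the standard unit vectors
  set eseq : ℕ → ℕ → ℂ := fun k n => if n = k then (1 : ℂ) else 0 with heseq
  have he_sum : ∀ k, ∑' n, ‖eseq k n‖ = 1 := by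
    intro k
    have h0 : (fun n => ‖eseq k n‖) = fun n => if n = k then (1 : ℝ) else 0 := by
      funext n; simp only [heseq]; split_ifs <;> simp
    rw [h0]
    exact tsum_ite_eq k (fun _ => (1 : ℝ))
  have he_memF : ∀ k, F.Mem (eseq k) ∧ F.norm (eseq k) ≤ C1 := by
    intro k
    obtain ⟨hm, hsum⟩ := hfin_memF (k + 1) (eseq k) (by
      intro n hn
      have hne : n ≠ k := by omega
      simp [heseq, hne])
    obtain ⟨hm', hn'⟩ := h1 _ hsum
    rw [he_sum k] at hn'
    exact ⟨hm', by linarith⟩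
  have he_pos : ∀ k, 0 < F.norm (eseq k) := by
    intro k
    rcases lt_or_eq_of_le (F.norm_nonneg (eseq k)) with h | h
    · exact h
    · exfalso
      have h0 := (F.norm_eq_zero_iff (eseq k) (he_memF k).1).mp h.symm
      have h1k : eseq k k = 0 := by rw [h0]; rfl
      simp [heseq] at h1k
  refine ⟨(4 * C1 * CE)⁻¹, CFE, by positivity, hCFE, ?_, ?_⟩
  · -- lower bound
    rw [hmnc_eq]
    rcases eq_or_lt_of_le hL0 with hLz | hLpos
    · rw [← hLz, mul_zero]
      exact Real.sInf_nonneg (fun x hx => hx.1.le)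
    · refine le_csInf ⟨_, hS_ne⟩ ?_
      rintro ε ⟨hεpos, Z, hZmem, hZcov⟩
      set xseq : ℕ → ℕ → ℂ := fun k => (((F.norm (eseq k))⁻¹ : ℝ) : ℂ) • eseq k with hxseq
      have hx_norm : ∀ k, F.norm (xseq k) = 1 := by
        intro k
        rw [hxseq]
        simp only []
        rw [F.norm_smul _ _ (he_memF k).1]
        simp only [Complex.norm_real, Real.norm_eq_abs,
          _root_.abs_of_pos (inv_pos.mpr (he_pos k))]
        exact inv_mul_cancel₀ (he_pos k).ne'
      have hx_memF : ∀ k, F.Mem (xseq k) := fun k => F.smul_mem _ _ (he_memF k).1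
      set y : ℕ → ℕ → ℂ := fun k => seqMul l (xseq k) with hy
      have hy_A : ∀ k, y k ∈ A := by
        intro k
        exact ⟨xseq k, ⟨hx_memF k, le_of_eq (hx_norm k)⟩, rfl⟩
      have hy_memE : ∀ k, E.Mem (y k) := fun k => (hDmem _ (hx_memF k)).1
      have hsep : ∀ k j, j ≠ k → ‖l k‖ / (C1 * CE) ≤ E.norm (y k - y j) := by
        intro k j hjk
        have hmem := SL_mem_sub E (hy_memE k) (hy_memE j)
        have hco := hce _ hmem k
        have hval : (y k - y j) k = l k * (((F.norm (eseq k))⁻¹ : ℝ) : ℂ) := by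
          have h1v : xseq k k = (((F.norm (eseq k))⁻¹ : ℝ) : ℂ) := by
            simp [hxseq, heseq]
          have h2v : xseq j k = 0 := by
            simp [hxseq, heseq, Ne.symm hjk]
          simp [hy, seqMul, h1v, h2v]
        rw [hval, norm_mul] at hco
        simp only [Complex.norm_real, Real.norm_eq_abs,
          _root_.abs_of_pos (inv_pos.mpr (he_pos k))] at hco
        have h1k : (C1)⁻¹ ≤ (F.norm (eseq k))⁻¹ :=
          inv_anti₀ (he_pos k) (he_memF k).2
        have hnn : 0 ≤ ‖l k‖ := norm_nonneg _
        have hkey : ‖l k‖ * C1⁻¹ ≤ CE * E.norm (y k - y j) := by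
          calc ‖l k‖ * C1⁻¹ ≤ ‖l k‖ * (F.norm (eseq k))⁻¹ :=
              mul_le_mul_of_nonneg_left h1k hnn
          _ ≤ CE * E.norm (y k - y j) := hco
        rw [div_le_iff₀ (by positivity)]
        calc ‖l k‖ = (‖l k‖ * C1⁻¹) * C1 := by field_simp
        _ ≤ (CE * E.norm (y k - y j)) * C1 :=
            mul_le_mul_of_nonneg_right hkey (le_of_lt hC1)
        _ = E.norm (y k - y j) * (C1 * CE) := by ring
      have hcob : Filter.IsCoboundedUnder (· ≤ ·) atTop (fun n => ‖l n‖) := by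
        have hbb : Filter.IsBoundedUnder (· ≥ ·) atTop (fun n => ‖l n‖) :=
          Filter.isBoundedUnder_of ⟨0, fun n => norm_nonneg (l n)⟩
        exact hbb.isCoboundedUnder_le
      have hfreq : ∃ᶠ k in atTop, L / 2 < ‖l k‖ :=
        frequently_lt_of_lt_limsup hcob (by rw [← hLdef]; linarith)
      have hinf : {k : ℕ | L / 2 < ‖l k‖}.Infinite :=
        Nat.frequently_atTop_iff_infinite.mp hfreq
      obtain ⟨T, hTsub, hTcard⟩ := hinf.exists_subset_card_eq (Z.card + 1)
      have hchoice : ∀ k, ∃ z ∈ Z, E.norm (y k - z) ≤ ε := fun k => hZcov _ (hy_A k)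
      set φ : ℕ → (ℕ → ℂ) := fun k => Classical.choose (hchoice k) with hφ
      have hφZ : ∀ k, φ k ∈ Z := fun k => (Classical.choose_spec (hchoice k)).1
      have hφn : ∀ k, E.norm (y k - φ k) ≤ ε := fun k =>
        (Classical.choose_spec (hchoice k)).2
      obtain ⟨k, hkT, j, hjT, hkj, hφeq⟩ :=
        Finset.exists_ne_map_eq_of_card_lt_of_maps_to
          (t := Z) (by rw [hTcard]; omega) (fun k _ => hφZ k)
      have hLk : L / 2 < ‖l k‖ := hTsub hkT
      have hzmem : E.Mem (φ k) := hZmem _ (hφZ k)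
      have htri : E.norm (y k - y j) ≤ 2 * ε := by
        have h1' : E.norm (y k - φ k) ≤ ε := hφn k
        have h2' : E.norm (φ k - y j) ≤ ε := by
          rw [SL_norm_sub_comm E hzmem (hy_memE j), hφeq]
          exact hφn j
        have hdec : y k - y j = (y k - φ k) + (φ k - y j) := by
          funext n; simp
        rw [hdec]
        calc E.norm ((y k - φ k) + (φ k - y j)) ≤
            E.norm (y k - φ k) + E.norm (φ k - y j) :=
              E.norm_add_le _ _ (SL_mem_sub E (hy_memE k) hzmem)
                (SL_mem_sub E hzmem (hy_memE j))
        _ ≤ 2 * ε := by linarith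
      have hfin : ‖l k‖ / (C1 * CE) ≤ 2 * ε :=
        le_trans (hsep k j (Ne.symm hkj)) htri
      have h4 : ‖l k‖ ≤ 2 * ε * (C1 * CE) := by
        rw [div_le_iff₀ (by positivity)] at hfin
        linarith
      have hpos4 : (0 : ℝ) < 4 * C1 * CE := by positivity
      rw [inv_mul_le_iff₀ hpos4]
      nlinarith
  · -- upper bound
    rw [hmnc_eq]
    have key : ∀ ε : ℝ, 0 < ε → sInf S ≤ CFE * L + (CFE + 1) * ε := by
      intro ε hε
      have hev : ∀ᶠ n in atTop, ‖l n‖ < L + ε :=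
        eventually_lt_of_limsup_lt (by rw [← hLdef]; linarith) hbdd
      obtain ⟨N, hN⟩ := Filter.eventually_atTop.mp hev
      set R : ℝ := B * (CE * CFE) with hR
      have hRnn : 0 ≤ R := by positivity
      have hcoord : ∀ x : ℕ → ℂ, F.Mem x → F.norm x ≤ 1 → ∀ n, ‖l n * x n‖ ≤ R := by
        intro x hx hx1 n
        obtain ⟨hxE, hxEn⟩ := hfe x hx
        have h1' : ‖x n‖ ≤ CE * E.norm x := hce x hxE n
        have h2' : E.norm x ≤ CFE := by
          calc E.norm x ≤ CFE * F.norm x := hxEn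
          _ ≤ CFE * 1 := mul_le_mul_of_nonneg_left hx1 hCFE.le
          _ = CFE := mul_one _
        rw [norm_mul, hR]
        have hxn : ‖x n‖ ≤ CE * CFE :=
          le_trans h1' (mul_le_mul_of_nonneg_left h2' hCE.le)
        exact mul_le_mul (hB n) hxn (norm_nonneg _) hBnn
      set δ : ℝ := ε / (CFE * (C1 * N) + 1) with hδdef
      have hδ : 0 < δ := by positivity
      obtain ⟨t, htfin, htcov⟩ :=
        (Metric.totallyBounded_iff.mp (isCompact_closedBall (0 : ℂ) R).totallyBounded) δ hδ
      set Tf : Finset ℂ := htfin.toFinset with hTf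
      have hnet : ∀ w : ℂ, ‖w‖ ≤ R → ∃ τ ∈ Tf, ‖w - τ‖ ≤ δ := by
        intro w hw
        have hw' : w ∈ Metric.closedBall (0 : ℂ) R := by
          simpa [Metric.mem_closedBall, dist_eq_norm] using hw
        obtain ⟨τ, hτt, hτ⟩ := Set.mem_iUnion₂.mp (htcov hw')
        refine ⟨τ, htfin.mem_toFinset.mpr hτt, ?_⟩
        rw [Metric.mem_ball, dist_eq_norm] at hτ
        exact hτ.le
      set sN : ℕ → ℂ := fun n => if n < N then (1 : ℂ) else 0 with hsN
      have hsN_memF : F.Mem sN ∧ Summable (fun n => ‖sN n‖) :=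
        hfin_memF N sN (by intro n hn; simp [hsN, Nat.not_lt.mpr hn])
      have hsN_sum : ∑' n, ‖sN n‖ = N := by
        have h0 : (fun n => ‖sN n‖) = fun n => if n < N then (1 : ℝ) else 0 := by
          funext n; simp only [hsN]; split_ifs <;> simp
        rw [h0, tsum_eq_sum (s := Finset.range N) (by
          intro n hn
          simp only [Finset.mem_range] at hn
          simp [hn])]
        rw [Finset.sum_congr rfl (fun n hn => if_pos (Finset.mem_range.mp hn))]
        simp
      have hsN_E : E.Mem sN ∧ E.norm sN ≤ CFE * (C1 * N) := by
        obtain ⟨hm, hn⟩ := h1 sN hsN_memF.2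
        obtain ⟨hmE, hnE⟩ := hfe sN hm
        rw [hsN_sum] at hn
        exact ⟨hmE, le_trans hnE (mul_le_mul_of_nonneg_left hn hCFE.le)⟩
      set Z : Finset (ℕ → ℂ) :=
        (Finset.pi (Finset.range N) (fun _ => Tf)).image
          (fun g (n : ℕ) => if h : n ∈ Finset.range N then g n h else 0) with hZ
      have hZE : ∀ z ∈ Z, E.Mem z := by
        intro z hz
        rw [hZ, Finset.mem_image] at hz
        obtain ⟨g, hg, rfl⟩ := hz
        have hy0 : ∀ n, N ≤ n →
            (fun (n : ℕ) => if h : n ∈ Finset.range N then g n h else 0) n = 0 := by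
          intro n hn
          have hnn : n ∉ Finset.range N := by
            simp only [Finset.mem_range]; omega
          exact dif_neg hnn
        have hm := (hfin_memF N _ hy0).1
        exact (hfe _ hm).1
      have hLε : (0 : ℝ) ≤ L + ε := by linarith
      have hεval : (0 : ℝ) < CFE * L + (CFE + 1) * ε := by nlinarith
      apply csInf_le ⟨0, fun x hx => hx.1.le⟩
      refine ⟨hεval, Z, hZE, ?_⟩
      rintro _ ⟨x, ⟨hxF, hx1⟩, rfl⟩
      have hpt : ∀ n, ∃ τ ∈ Tf, ‖l n * x n - τ‖ ≤ δ := fun n =>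
        hnet _ (hcoord x hxF hx1 n)
      set z : ℕ → ℂ := fun n => if h : n ∈ Finset.range N then
        Classical.choose (hpt n) else 0 with hz
      have hzZ : z ∈ Z := by
        rw [hZ, Finset.mem_image]
        refine ⟨fun n _ => Classical.choose (hpt n), ?_, rfl⟩
        rw [Finset.mem_pi]
        intro n _
        exact (Classical.choose_spec (hpt n)).1
      refine ⟨z, hzZ, ?_⟩
      set xh : ℕ → ℂ := fun n => if n < N then l n * x n - z n else 0 with hhead
      set xt : ℕ → ℂ := fun n => if n < N then 0 else l n * x n with htail
      have hdec : seqMul l x - z = xh + xt := by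
        funext n
        by_cases hn : n < N
        · simp [hhead, htail, hn, seqMul, hz, Finset.mem_range]
        · have hzn : z n = 0 := by simp [hz, Finset.mem_range, hn]
          simp [hhead, htail, hn, seqMul, hzn]
      obtain ⟨hxE, hxEn⟩ := hfe x hxF
      obtain ⟨htail_mem, htail_le⟩ := E.ideal (((L + ε : ℝ) : ℂ) • x) xt
        (E.smul_mem _ _ hxE) (by
          intro n
          by_cases hn : n < N
          · simp only [htail, if_pos hn, norm_zero]
            positivity
          · simp only [htail, if_neg hn, Pi.smul_apply, smul_eq_mul, norm_mul,
              Complex.norm_real, Real.norm_eq_abs, _root_.abs_of_nonneg hLε]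
            exact mul_le_mul_of_nonneg_right (hN n (Nat.le_of_not_lt hn)).le
              (norm_nonneg _))
      have htail_norm : E.norm xt ≤ (L + ε) * CFE := by
        rw [E.norm_smul (((L + ε : ℝ) : ℂ)) x hxE] at htail_le
        simp only [Complex.norm_real, Real.norm_eq_abs, _root_.abs_of_nonneg hLε] at htail_le
        calc E.norm xt ≤ (L + ε) * E.norm x := htail_le
        _ ≤ (L + ε) * (CFE * F.norm x) := mul_le_mul_of_nonneg_left hxEn hLε
        _ ≤ (L + ε) * (CFE * 1) := by
            refine mul_le_mul_of_nonneg_left ?_ hLε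
            exact mul_le_mul_of_nonneg_left hx1 hCFE.le
        _ = (L + ε) * CFE := by ring
      have hhead_mem : E.Mem xh := by
        have hm := (hfin_memF N xh (by
          intro n hn; simp [hhead, Nat.not_lt.mpr hn])).1
        exact (hfe _ hm).1
      obtain ⟨_, hhead_le⟩ := E.ideal (((δ : ℝ) : ℂ) • sN) xh
        (E.smul_mem _ _ hsN_E.1) (by
          intro n
          by_cases hn : n < N
          · have hzn : z n = Classical.choose (hpt n) := by
              simp [hz, Finset.mem_range, hn]
            simp only [hhead, if_pos hn, hsN, Pi.smul_apply, smul_eq_mul,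
              mul_one, Complex.norm_real, Real.norm_eq_abs, _root_.abs_of_pos hδ]
            rw [hzn]
            exact (Classical.choose_spec (hpt n)).2
          · simp [hhead, hsN, hn])
      have hhead_norm : E.norm xh ≤ ε := by
        rw [E.norm_smul (((δ : ℝ) : ℂ)) sN hsN_E.1] at hhead_le
        simp only [Complex.norm_real, Real.norm_eq_abs, _root_.abs_of_pos hδ] at hhead_le
        have h5 : δ * E.norm sN ≤ δ * (CFE * (C1 * N)) :=
          mul_le_mul_of_nonneg_left hsN_E.2 hδ.le
        have h6 : δ * (CFE * (C1 * N)) ≤ ε := by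
          rw [hδdef, div_mul_eq_mul_div, div_le_iff₀ (by positivity)]
          have h0 : (0 : ℝ) ≤ CFE * (C1 * N) := by positivity
          nlinarith
        linarith
      rw [hdec]
      calc E.norm (xh + xt) ≤ E.norm xh + E.norm xt :=
          E.norm_add_le _ _ hhead_mem htail_mem
      _ ≤ ε + (L + ε) * CFE := by linarith
      _ = CFE * L + (CFE + 1) * ε := by ring
    by_contra hcon
    push_neg at hcon
    set d : ℝ := sInf S - CFE * L with hd
    have hdpos : 0 < d := by simp only [hd]; linarith
    have hk := key (d / (2 * (CFE + 1))) (by positivity)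
    have heq : (CFE + 1) * (d / (2 * (CFE + 1))) = d / 2 := by
      field_simp
    rw [heq] at hk
    simp only [hd] at hk
    linarith
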